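/- Let {Z_{i,j}}_{i,j ≥ 1} be an infinite array of independent real random variables such that sup_{i,j} E|Z_{i,j}|^{4+δ} ≤ C for some constants C, δ > 0, and let (p_n) be a sequence of positive integers with p_n ≤ K n for all n and some constant K > 0. Set B_n = n^{(1/2)(1+δ/8)^{-1}} and M(n) = max_{1 ≤ i ≤ p_n, 1 ≤ j ≤ n} |Z_{i,j}|. Then almost surely, M(n) ≤ B_n for all sufficiently large n. -/

import Mathlib

open MeasureTheory Filter
open scoped ENNReal

/-- for an infinite array of independent random variables `Z_{i,j}` with
uniformly bounded `(4+δ)`-th absolute moments, and `p_n ≤ K n`, almost surely the maximum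
`M(n) = max_{1 ≤ i ≤ p_n, 1 ≤ j ≤ n} |Z_{i,j}|` satisfies `M(n) ≤ B_n` for all
sufficiently large `n`, where `B_n = n^{(1/2)(1+δ/8)⁻¹}`. -/
theorem truncation_level_eventually_dominates_max
    (Ω : Type*) [MeasurableSpace Ω] (μ : Measure Ω) [IsProbabilityMeasure μ]
    (Z : ℕ → ℕ → Ω → ℝ)
    (hmeas : ∀ i j, Measurable (Z i j))
    (hIndep : ProbabilityTheory.iIndepFun
      (fun ij : ℕ × ℕ => Z ij.1 ij.2) μ)
    (C δ : ℝ) (hC : 0 < C) (hδ : 0 < δ)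
    (hmom : ∀ i j, ∫⁻ ω, ENNReal.ofReal (|Z i j ω| ^ (4 + δ)) ∂μ ≤ ENNReal.ofReal C)
    (K : ℝ) (hK : 0 < K)
    (p : ℕ → ℕ) (hp : ∀ n : ℕ, (p n : ℝ) ≤ K * n) :
    ∀ᵐ ω ∂μ, ∀ᶠ n : ℕ in atTop,
      ∀ i ∈ Finset.Icc 1 (p n), ∀ j ∈ Finset.Icc 1 n,
        |Z i j ω| ≤ (n : ℝ) ^ ((1 / 2 : ℝ) * (1 + δ / 8)⁻¹) := by
  have hδ8 : (0:ℝ) < 1 + δ / 8 := by linarith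
  set a : ℝ := (1 / 2 : ℝ) * (1 + δ / 8)⁻¹ with ha_def
  have ha_pos : 0 < a := by positivity
  set e : ℝ := a * (4 + δ) with he_def
  have he2 : (2:ℝ) < e := by
    have h1 : e = (4 + δ) / (2 + δ / 4) := by
      rw [he_def, ha_def]; field_simp; ring
    rw [h1, lt_div_iff₀ (by linarith)]; linarith
  -- the geometric ratio
  set q : ℝ := 4 / (2:ℝ) ^ e with hq_def
  have h2e_pos : (0:ℝ) < (2:ℝ) ^ e := Real.rpow_pos_of_pos two_pos e
  have hq0 : 0 ≤ q := by positivity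
  have hq1 : q < 1 := by
    rw [hq_def, div_lt_one h2e_pos]
    calc (4:ℝ) = (2:ℝ) ^ (2:ℝ) := by
          rw [show ((2:ℝ):ℝ) = ((2:ℕ):ℝ) by norm_num, Real.rpow_natCast]; norm_num
      _ < (2:ℝ) ^ e := (Real.rpow_lt_rpow_left_iff one_lt_two).2 he2
  -- the truncation levels and event sizes
  set N : ℕ → ℕ := fun ℓ => ⌈K * 2 ^ (ℓ + 1)⌉₊ with hN_def
  set B : ℕ → ℝ := fun ℓ => ((2 ^ ℓ : ℕ) : ℝ) ^ a with hB_def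
  have hB1 : ∀ ℓ, 1 ≤ B ℓ := by
    intro ℓ
    exact Real.one_le_rpow (by exact_mod_cast Nat.one_le_two_pow) ha_pos.le
  have hBpos : ∀ ℓ, 0 < (B ℓ) ^ (4 + δ) :=
    fun ℓ => Real.rpow_pos_of_pos (lt_of_lt_of_le one_pos (hB1 ℓ)) _
  set s : ℕ → Set Ω := fun ℓ =>
    ⋃ i ∈ Finset.Icc 1 (N ℓ), ⋃ j ∈ Finset.Icc 1 (2 ^ (ℓ + 1)),
      {ω | B ℓ < |Z i j ω|} with hs_def
  -- single-variable Markov bound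
  have hsingle : ∀ i j ℓ, μ {ω | B ℓ < |Z i j ω|} ≤ ENNReal.ofReal (C / (B ℓ) ^ (4 + δ)) := by
    intro i j ℓ
    have hf : Measurable fun ω => ENNReal.ofReal (|Z i j ω| ^ (4 + δ)) :=
      ENNReal.measurable_ofReal.comp ((hmeas i j).abs.pow measurable_const)
    have hsub : {ω | B ℓ < |Z i j ω|} ⊆
        {ω | ENNReal.ofReal ((B ℓ) ^ (4 + δ)) ≤ ENNReal.ofReal (|Z i j ω| ^ (4 + δ))} := by
      intro ω hω
      exact ENNReal.ofReal_le_ofReal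
        (Real.rpow_le_rpow (by linarith [hB1 ℓ]) (le_of_lt hω) (by linarith))
    calc μ {ω | B ℓ < |Z i j ω|}
        ≤ μ {ω | ENNReal.ofReal ((B ℓ) ^ (4 + δ)) ≤ ENNReal.ofReal (|Z i j ω| ^ (4 + δ))} :=
          measure_mono hsub
      _ ≤ (∫⁻ ω, ENNReal.ofReal (|Z i j ω| ^ (4 + δ)) ∂μ) / ENNReal.ofReal ((B ℓ) ^ (4 + δ)) :=
          meas_ge_le_lintegral_div hf.aemeasurable
            (ENNReal.ofReal_pos.2 (hBpos ℓ)).ne' ENNReal.ofReal_ne_top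
      _ ≤ ENNReal.ofReal C / ENNReal.ofReal ((B ℓ) ^ (4 + δ)) :=
          ENNReal.div_le_div_right (hmom i j) _
      _ = ENNReal.ofReal (C / (B ℓ) ^ (4 + δ)) :=
          (ENNReal.ofReal_div_of_pos (hBpos ℓ)).symm
  -- union bound
  have hsB : ∀ ℓ, μ (s ℓ) ≤
      (((N ℓ) * 2 ^ (ℓ + 1) : ℕ) : ℝ≥0∞) * ENNReal.ofReal (C / (B ℓ) ^ (4 + δ)) := by
    intro ℓ
    calc μ (s ℓ) ≤ ∑ i ∈ Finset.Icc 1 (N ℓ),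
          μ (⋃ j ∈ Finset.Icc 1 (2 ^ (ℓ + 1)), {ω | B ℓ < |Z i j ω|}) :=
            measure_biUnion_finset_le _ _
      _ ≤ ∑ i ∈ Finset.Icc 1 (N ℓ), ∑ j ∈ Finset.Icc 1 (2 ^ (ℓ + 1)),
          μ {ω | B ℓ < |Z i j ω|} :=
            Finset.sum_le_sum fun i _ => measure_biUnion_finset_le _ _
      _ ≤ ∑ i ∈ Finset.Icc 1 (N ℓ), ∑ j ∈ Finset.Icc 1 (2 ^ (ℓ + 1)),
          ENNReal.ofReal (C / (B ℓ) ^ (4 + δ)) :=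
            Finset.sum_le_sum fun i _ => Finset.sum_le_sum fun j _ => hsingle i j ℓ
      _ = (((N ℓ) * 2 ^ (ℓ + 1) : ℕ) : ℝ≥0∞) * ENNReal.ofReal (C / (B ℓ) ^ (4 + δ)) := by
            simp [Finset.sum_const, Nat.card_Icc, mul_assoc, mul_comm, mul_left_comm]
  -- real-number bound by a geometric series
  set c : ℝ := 4 * (K + 1) * C with hc_def
  have hc0 : 0 ≤ c := by positivity
  have hreal : ∀ ℓ, (((N ℓ) * 2 ^ (ℓ + 1) : ℕ) : ℝ) * (C / (B ℓ) ^ (4 + δ)) ≤ c * q ^ ℓ := by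
    intro ℓ
    have hpow1 : (1:ℝ) ≤ 2 ^ (ℓ + 1) := one_le_pow₀ one_le_two
    have hNle : ((N ℓ : ℕ) : ℝ) ≤ (K + 1) * 2 ^ (ℓ + 1) := by
      have h1 : ((N ℓ : ℕ) : ℝ) < K * 2 ^ (ℓ + 1) + 1 :=
        Nat.ceil_lt_add_one (by positivity)
      nlinarith
    have hBeq : (B ℓ) ^ (4 + δ) = (2:ℝ) ^ ((ℓ : ℝ) * e) := by
      rw [hB_def]
      push_cast
      rw [← Real.rpow_natCast (2:ℝ) ℓ, ← Real.rpow_mul (by norm_num),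
        ← Real.rpow_mul (by norm_num), he_def]
    have hqeq : q ^ ℓ = 4 ^ ℓ / (2:ℝ) ^ ((ℓ : ℝ) * e) := by
      rw [hq_def, div_pow, ← Real.rpow_natCast ((2:ℝ) ^ e) ℓ, ← Real.rpow_mul (by norm_num)]
      ring_nf
    have hden : (0:ℝ) < (2:ℝ) ^ ((ℓ : ℝ) * e) := Real.rpow_pos_of_pos two_pos _
    have hcast : (((N ℓ) * 2 ^ (ℓ + 1) : ℕ) : ℝ) = ((N ℓ : ℕ) : ℝ) * 2 ^ (ℓ + 1) := by
      push_cast; ring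
    have h44 : ((2:ℝ) ^ (ℓ + 1)) * 2 ^ (ℓ + 1) = 4 * 4 ^ ℓ := by
      rw [← pow_add]
      rw [show ℓ + 1 + (ℓ + 1) = 2 * (ℓ + 1) by ring, pow_mul]
      norm_num
      rw [pow_succ]; ring
    have key : (((N ℓ) * 2 ^ (ℓ + 1) : ℕ) : ℝ) * C ≤ c * 4 ^ ℓ := by
      rw [hcast, hc_def]
      calc ((N ℓ : ℕ) : ℝ) * 2 ^ (ℓ + 1) * C
          ≤ ((K + 1) * 2 ^ (ℓ + 1)) * 2 ^ (ℓ + 1) * C := by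
            have := mul_le_mul_of_nonneg_right
              (mul_le_mul_of_nonneg_right hNle (by positivity : (0:ℝ) ≤ 2 ^ (ℓ + 1)))
              hC.le
            linarith [this]
        _ = 4 * (K + 1) * C * 4 ^ ℓ := by
            rw [mul_assoc (K+1)]
            rw [h44]; ring
    rw [hBeq, hqeq, ← mul_div_assoc, ← mul_div_assoc]
    gcongr
  -- summability of the dominating series
  have hgs : Summable fun ℓ : ℕ => c * q ^ ℓ :=
    (summable_geometric_of_lt_one hq0 hq1).mul_left c
  have htsum : (∑' ℓ, μ (s ℓ)) ≠ ⊤ := by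
    have hle : ∀ ℓ, μ (s ℓ) ≤ ENNReal.ofReal (c * q ^ ℓ) := by
      intro ℓ
      refine le_trans (hsB ℓ) (le_trans ?_ (ENNReal.ofReal_le_ofReal (hreal ℓ)))
      rw [← ENNReal.ofReal_natCast, ← ENNReal.ofReal_mul (by positivity)]
    refine ne_top_of_le_ne_top ?_ (ENNReal.tsum_le_tsum hle)
    rw [← ENNReal.ofReal_tsum_of_nonneg (fun ℓ => by positivity) hgs]
    exact ENNReal.ofReal_ne_top
  -- Borel–Cantelli and conclusion
  filter_upwards [ae_eventually_notMem htsum] with ω hω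
  obtain ⟨L, hL⟩ := eventually_atTop.mp hω
  refine eventually_atTop.2 ⟨2 ^ L, fun n hn i hi j hj => ?_⟩
  have hn1 : 1 ≤ n := le_trans Nat.one_le_two_pow hn
  set ℓ := Nat.log 2 n with hℓ_def
  have h1 : 2 ^ ℓ ≤ n := Nat.pow_log_le_self 2 (by omega)
  have h2 : n < 2 ^ (ℓ + 1) := Nat.lt_pow_succ_log_self one_lt_two n
  have hLℓ : L ≤ ℓ := (Nat.le_log_iff_pow_le one_lt_two (by omega)).2 hn
  have hns := hL ℓ hLℓ
  rw [hs_def] at hns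
  simp only [Set.mem_iUnion, not_exists, Set.mem_setOf_eq, exists_prop, not_and, not_lt] at hns
  rw [Finset.mem_Icc] at hi hj
  have hn2 : (n : ℝ) ≤ 2 ^ (ℓ + 1) := by
    have : (n : ℝ) ≤ ((2 ^ (ℓ + 1) : ℕ) : ℝ) := Nat.cast_le.2 h2.le
    simpa using this
  have hiN : i ∈ Finset.Icc 1 (N ℓ) := by
    rw [Finset.mem_Icc]
    refine ⟨hi.1, ?_⟩
    have hiK : (i : ℝ) ≤ K * 2 ^ (ℓ + 1) := by
      calc (i : ℝ) ≤ (p n : ℝ) := Nat.cast_le.2 hi.2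
        _ ≤ K * n := hp n
        _ ≤ K * 2 ^ (ℓ + 1) := by nlinarith
    have : (i : ℝ) ≤ (N ℓ : ℕ) := le_trans hiK (Nat.le_ceil _)
    exact_mod_cast this
  have hjN : j ∈ Finset.Icc 1 (2 ^ (ℓ + 1)) := by
    rw [Finset.mem_Icc]; exact ⟨hj.1, le_trans hj.2 h2.le⟩
  have hZ : |Z i j ω| ≤ B ℓ := hns i hiN j hjN
  refine le_trans hZ ?_
  rw [hB_def]
  exact Real.rpow_le_rpow (by positivity) (by exact_mod_cast h1) ha_pos.le
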